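/- Let n ≥ 1 and 1 ≤ h ≤ n be integers, let a ∈ ℚ^{h+1} be nonzero, and let B ∈ M₂(ℤ) with det B ≠ 0. Then the image of L_a under the linear map x ↦ φ_n(B)x equals L_b, where b = (φ_h(B^{−1}))ᵀ·a (here B^{−1} ∈ M₂(ℚ) and φ_h is applied to it via the same formula over ℚ). -/

import Mathlib

/-- For a 2×2 matrix `B = ((a,b),(c,d))` over a commutative ring, `phiMap n B` is the
`(n+1)×(n+1)` matrix whose `(i,j)` entry is the coefficient of `x^j` in the polynomial
`(ax+b)^i (cx+d)^{n−i}`. -/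
noncomputable def phiMap {R : Type*} [CommRing R] (n : ℕ) (B : Matrix (Fin 2) (Fin 2) R) :
    Matrix (Fin (n + 1)) (Fin (n + 1)) R :=
  Matrix.of fun i j =>
    ((Polynomial.C (B 0 0) * Polynomial.X + Polynomial.C (B 0 1)) ^ (i : ℕ) *
      (Polynomial.C (B 1 0) * Polynomial.X + Polynomial.C (B 1 1)) ^ (n - (i : ℕ))).coeff
      (j : ℕ)

/-- For `a ∈ ℝ^{h+1}`, `L_a ⊆ ℝ^{n+1}` is the subspace of all `x = (x₀, …, x_n)` with
`a₀x_j + a₁x_{j+1} + … + a_h x_{j+h} = 0` for all `0 ≤ j ≤ n−h`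
(the index `j + i` is reduced mod `n+1`, which has no effect when `h ≤ n`). -/
def Lsub (n h : ℕ) (a : Fin (h + 1) → ℝ) : Set (Fin (n + 1) → ℝ) :=
  {x | ∀ j : ℕ, j ≤ n - h →
    ∑ i : Fin (h + 1), a i * x ⟨(j + i.1) % (n + 1), Nat.mod_lt _ n.succ_pos⟩ = 0}

open Polynomial Finset Matrix

section Aux

variable {K : Type*} [Field K]

noncomputable def linPoly (B : Matrix (Fin 2) (Fin 2) K) (r : Fin 2) : K[X] :=
  C (B r 0) * X + C (B r 1)

noncomputable def tfm (B : Matrix (Fin 2) (Fin 2) K) (n : ℕ) (p : K[X]) : K[X] :=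
  ∑ j ∈ Finset.range (n + 1), C (p.coeff j) * linPoly B 0 ^ j * linPoly B 1 ^ (n - j)

noncomputable def polv {m : ℕ} (x : Fin (m + 1) → K) : K[X] :=
  ∑ i : Fin (m + 1), C (x i) * X ^ (i : ℕ)

lemma polv_coeff_lt {m k : ℕ} (x : Fin (m + 1) → K) (hk : k < m + 1) :
    (polv x).coeff k = x ⟨k, hk⟩ := by
  rw [polv, finset_sum_coeff, Finset.sum_eq_single (⟨k, hk⟩ : Fin (m + 1))]
  · simp
  · intro b _ hb
    simp only [coeff_C_mul, coeff_X_pow]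
    rw [if_neg, mul_zero]
    exact fun h => hb (Fin.ext h.symm)
  · simp

lemma polv_coeff_ge {m k : ℕ} (x : Fin (m + 1) → K) (hk : m < k) :
    (polv x).coeff k = 0 := by
  rw [polv, finset_sum_coeff]
  refine Finset.sum_eq_zero fun i _ => ?_
  simp only [coeff_C_mul, coeff_X_pow]
  rw [if_neg, mul_zero]
  exact fun h => absurd (h ▸ i.isLt) (by omega)

lemma polv_natDegree {m : ℕ} (x : Fin (m + 1) → K) : (polv x).natDegree ≤ m := by
  refine natDegree_le_iff_coeff_eq_zero.mpr fun k hk => polv_coeff_ge x ?_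
  exact_mod_cast hk

lemma polv_eq {m : ℕ} (p : K[X]) (hp : p.natDegree ≤ m) :
    polv (fun i : Fin (m + 1) => p.coeff (i : ℕ)) = p := by
  ext k
  rcases lt_or_ge k (m + 1) with hk | hk
  · rw [polv_coeff_lt _ hk]
  · rw [polv_coeff_ge _ (by omega), eq_comm]
    exact coeff_eq_zero_of_natDegree_lt (by omega)

lemma linPoly_natDegree (B : Matrix (Fin 2) (Fin 2) K) (r : Fin 2) :
    (linPoly B r).natDegree ≤ 1 := natDegree_linear_le

lemma tfm_natDegree (B : Matrix (Fin 2) (Fin 2) K) (n : ℕ) (p : K[X]) :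
    (tfm B n p).natDegree ≤ n := by
  refine natDegree_sum_le_of_forall_le _ _ fun j hj => ?_
  have hj' : j ≤ n := by simpa [Nat.lt_succ_iff] using hj
  calc (C (p.coeff j) * linPoly B 0 ^ j * linPoly B 1 ^ (n - j)).natDegree
      ≤ (C (p.coeff j) * linPoly B 0 ^ j).natDegree + (linPoly B 1 ^ (n - j)).natDegree :=
        natDegree_mul_le
    _ ≤ ((C (p.coeff j)).natDegree + (linPoly B 0 ^ j).natDegree) + (linPoly B 1 ^ (n - j)).natDegree := by
        exact Nat.add_le_add_right natDegree_mul_le _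
    _ ≤ (0 + j * 1) + (n - j) * 1 := by
        refine add_le_add (add_le_add (le_of_eq (natDegree_C _)) ?_) ?_
        · exact le_trans (natDegree_pow_le) (Nat.mul_le_mul_left _ (linPoly_natDegree B 0))
        · exact le_trans (natDegree_pow_le) (Nat.mul_le_mul_left _ (linPoly_natDegree B 1))
    _ ≤ n := by omega

lemma linPoly_ne (B : Matrix (Fin 2) (Fin 2) K) (hB : B.det ≠ 0) : linPoly B 1 ≠ 0 := by
  intro hc
  apply hB
  have hd : B 1 1 = 0 := by
    have := congrArg (fun p => Polynomial.coeff p 0) hc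
    simpa [linPoly] using this
  have hcc : B 1 0 = 0 := by
    have := congrArg (fun p => Polynomial.coeff p 1) hc
    simpa [linPoly] using this
  rw [Matrix.det_fin_two, hd, hcc]
  ring


lemma iotaC (c : K) :
    algebraMap K[X] (RatFunc K) (C c) = algebraMap K (RatFunc K) c := by
  rw [← Polynomial.algebraMap_eq, ← IsScalarTower.algebraMap_apply]

lemma iota_lin_ne (B : Matrix (Fin 2) (Fin 2) K) (hv : linPoly B 1 ≠ 0) :
    algebraMap K[X] (RatFunc K) (linPoly B 1) ≠ 0 := by
  rw [Ne, map_eq_zero_iff _ (RatFunc.algebraMap_injective K)]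
  exact hv

lemma tfm_repr (B : Matrix (Fin 2) (Fin 2) K) (hv : linPoly B 1 ≠ 0) {n : ℕ} {p : K[X]}
    (hp : p.natDegree ≤ n) :
    algebraMap K[X] (RatFunc K) (tfm B n p) =
      algebraMap K[X] (RatFunc K) (linPoly B 1) ^ n *
        Polynomial.aeval (algebraMap K[X] (RatFunc K) (linPoly B 0) /
          algebraMap K[X] (RatFunc K) (linPoly B 1)) p := by
  have hv' := iota_lin_ne B hv
  conv_rhs => rw [p.as_sum_range' (n + 1) (Nat.lt_succ_of_le hp)]
  rw [map_sum, tfm, map_sum, Finset.mul_sum]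
  refine Finset.sum_congr rfl fun j hj => ?_
  have hj' : j ≤ n := Nat.lt_succ_iff.mp (Finset.mem_range.mp hj)
  rw [_root_.map_mul, _root_.map_mul, map_pow, map_pow, aeval_monomial, iotaC, div_pow,
    pow_sub₀ _ hv' hj']
  field_simp

lemma tfm_mul (B : Matrix (Fin 2) (Fin 2) K) (hv : linPoly B 1 ≠ 0) {p q : K[X]} {hN hM : ℕ}
    (hp : p.natDegree ≤ hN) (hq : q.natDegree ≤ hM) :
    tfm B (hN + hM) (p * q) = tfm B hN p * tfm B hM q := by
  apply RatFunc.algebraMap_injective K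
  rw [_root_.map_mul, tfm_repr B hv (le_trans natDegree_mul_le (add_le_add hp hq)),
    tfm_repr B hv hp, tfm_repr B hv hq, _root_.map_mul, pow_add]
  ring

lemma tfm_id {n : ℕ} (p : K[X]) (hp : p.natDegree ≤ n) :
    tfm (1 : Matrix (Fin 2) (Fin 2) K) n p = p := by
  conv_rhs => rw [p.as_sum_range' (n + 1) (Nat.lt_succ_of_le hp)]
  rw [tfm]
  refine Finset.sum_congr rfl fun j hj => ?_
  simp [linPoly, Matrix.one_apply, C_mul_X_pow_eq_monomial]

lemma tfm_comp (B B' : Matrix (Fin 2) (Fin 2) K) (hv : linPoly B 1 ≠ 0) {n : ℕ} (p : K[X]) :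
    tfm B n (tfm B' n p) = tfm (B' * B) n p := by
  apply RatFunc.algebraMap_injective K
  have hv' := iota_lin_ne B hv
  set ι := algebraMap K[X] (RatFunc K) with hι
  set z := ι (linPoly B 0) / ι (linPoly B 1) with hz
  have e0 : ι (linPoly (B' * B) 0) =
      algebraMap K (RatFunc K) (B' 0 0) * ι (linPoly B 0) +
        algebraMap K (RatFunc K) (B' 0 1) * ι (linPoly B 1) := by
    simp only [hι, linPoly, Matrix.mul_apply, Fin.sum_univ_two, map_add, _root_.map_mul, iotaC]
    ring
  have e1 : ι (linPoly (B' * B) 1) =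
      algebraMap K (RatFunc K) (B' 1 0) * ι (linPoly B 0) +
        algebraMap K (RatFunc K) (B' 1 1) * ι (linPoly B 1) := by
    simp only [hι, linPoly, Matrix.mul_apply, Fin.sum_univ_two, map_add, _root_.map_mul, iotaC]
    ring
  have f0 : algebraMap K (RatFunc K) (B' 0 0) * z + algebraMap K (RatFunc K) (B' 0 1) =
      ι (linPoly (B' * B) 0) / ι (linPoly B 1) := by
    rw [e0, hz]; field_simp
  have f1 : algebraMap K (RatFunc K) (B' 1 0) * z + algebraMap K (RatFunc K) (B' 1 1) =
      ι (linPoly (B' * B) 1) / ι (linPoly B 1) := by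
    rw [e1, hz]; field_simp
  rw [tfm_repr B hv (tfm_natDegree B' n p)]
  conv_lhs => rw [tfm]
  rw [map_sum, Finset.mul_sum]
  conv_rhs => rw [tfm]
  rw [map_sum]
  refine Finset.sum_congr rfl fun j hj => ?_
  have hj' : j ≤ n := Nat.lt_succ_iff.mp (Finset.mem_range.mp hj)
  rw [_root_.map_mul, _root_.map_mul, map_pow, map_pow, aeval_C]
  have g0 : (aeval z) (linPoly B' 0) = ι (linPoly (B' * B) 0) / ι (linPoly B 1) := by
    rw [← f0]; simp [linPoly]
  have g1 : (aeval z) (linPoly B' 1) = ι (linPoly (B' * B) 1) / ι (linPoly B 1) := by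
    rw [← f1]; simp [linPoly]
  rw [g0, g1, _root_.map_mul, _root_.map_mul, map_pow, map_pow, iotaC, div_pow, div_pow]
  have hvn : j + (n - j) = n := by omega
  field_simp
  rw [← hι, show ι (linPoly B 1) ^ n = ι (linPoly B 1) ^ j * ι (linPoly B 1) ^ (n - j) by
    rw [← pow_add, hvn]]
  ring


end Aux


section Aux2
open Polynomial Finset Matrix
variable {K : Type*} [Field K]

lemma phiMap_map {R S : Type*} [CommRing R] [CommRing S] (f : R →+* S) (n : ℕ)
    (B : Matrix (Fin 2) (Fin 2) R) :
    (phiMap n B).map f = phiMap n (B.map f) := by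
  ext i j
  simp only [phiMap, Matrix.map_apply, Matrix.of_apply]
  rw [← Polynomial.coeff_map]
  congr 1
  simp [Polynomial.map_mul, Polynomial.map_pow, Polynomial.map_add]

lemma phiMap_transpose_mulVec (B : Matrix (Fin 2) (Fin 2) K) {n : ℕ} (x : Fin (n + 1) → K)
    (j : Fin (n + 1)) :
    (phiMap n B).transpose.mulVec x j = (tfm B n (polv x)).coeff (j : ℕ) := by
  rw [tfm, finset_sum_coeff,
    ← Fin.sum_univ_eq_sum_range
      (fun k => (C ((polv x).coeff k) * linPoly B 0 ^ k * linPoly B 1 ^ (n - k)).coeff (j : ℕ))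
      (n + 1)]
  simp only [Matrix.mulVec, Matrix.transpose_apply, dotProduct, phiMap, Matrix.of_apply]
  refine Finset.sum_congr rfl fun i _ => ?_
  rw [polv_coeff_lt x i.isLt, Fin.eta, mul_assoc, coeff_C_mul, mul_comm]
  rfl

lemma adjoint_sum (B : Matrix (Fin 2) (Fin 2) K) {n : ℕ} (x : Fin (n + 1) → K) (P : K[X])
    (hP : P.natDegree ≤ n) :
    ∑ m : Fin (n + 1), (phiMap n B).mulVec x m * P.coeff (m : ℕ) =
      ∑ k : Fin (n + 1), x k * (tfm B n P).coeff (k : ℕ) := by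
  have key : ∀ k : Fin (n + 1), (tfm B n P).coeff (k : ℕ) =
      ∑ m : Fin (n + 1), phiMap n B m k * P.coeff (m : ℕ) := by
    intro k
    have := phiMap_transpose_mulVec B (fun m : Fin (n + 1) => P.coeff (m : ℕ)) k
    rw [polv_eq P hP] at this
    rw [← this]
    simp [Matrix.mulVec, dotProduct]
  simp only [key, Matrix.mulVec, dotProduct, Finset.sum_mul, Finset.mul_sum]
  rw [Finset.sum_comm]
  refine Finset.sum_congr rfl fun k _ => Finset.sum_congr rfl fun m _ => by ring

lemma pair_shift {n h : ℕ} (h2 : h ≤ n) (c : Fin (h + 1) → K) (x : Fin (n + 1) → K) (j : ℕ)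
    (hj : j ≤ n - h) :
    ∑ m : Fin (n + 1), x m * (polv c * X ^ j).coeff (m : ℕ) =
      ∑ i : Fin (h + 1), c i * x ⟨(j + i.1) % (n + 1), Nat.mod_lt _ n.succ_pos⟩ := by
  rw [polv, Finset.sum_mul]
  simp only [finset_sum_coeff, mul_assoc, ← pow_add, coeff_C_mul, coeff_X_pow, Finset.mul_sum]
  rw [Finset.sum_comm]
  refine Finset.sum_congr rfl fun i _ => ?_
  have hi := Nat.lt_succ_iff.mp i.isLt
  have hle : (i : ℕ) + j < n + 1 := by omega
  rw [Finset.sum_eq_single (⟨(i : ℕ) + j, hle⟩ : Fin (n + 1))]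
  · have e : (j + i.1) % (n + 1) = i.1 + j := by rw [Nat.mod_eq_of_lt (by omega), Nat.add_comm]
    simp [e, mul_comm]
  · intro b _ hb
    rw [if_neg (fun hh => hb (Fin.ext hh))]
    simp
  · simp

lemma pair_mul {n h : ℕ} (h2 : h ≤ n) (c : Fin (h + 1) → K) (x : Fin (n + 1) → K)
    (hx : ∀ j : ℕ, j ≤ n - h →
      ∑ i : Fin (h + 1), c i * x ⟨(j + i.1) % (n + 1), Nat.mod_lt _ n.succ_pos⟩ = 0)
    (Q : K[X]) (hQ : Q.natDegree ≤ n - h) :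
    ∑ m : Fin (n + 1), x m * (polv c * Q).coeff (m : ℕ) = 0 := by
  have hexp : polv c * Q =
      ∑ k ∈ Finset.range (n - h + 1), C (Q.coeff k) * (polv c * X ^ k) := by
    conv_lhs => rw [Q.as_sum_range' (n - h + 1) (Nat.lt_succ_of_le hQ)]
    rw [Finset.mul_sum]
    refine Finset.sum_congr rfl fun k _ => ?_
    rw [← C_mul_X_pow_eq_monomial]; ring
  rw [hexp]
  simp only [finset_sum_coeff, coeff_C_mul, Finset.mul_sum]
  rw [Finset.sum_comm]
  refine Finset.sum_eq_zero fun k hk => ?_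
  have hk' : k ≤ n - h := Nat.lt_succ_iff.mp (Finset.mem_range.mp hk)
  have := pair_shift h2 c x k hk'
  calc ∑ m : Fin (n + 1), x m * (Q.coeff k * (polv c * X ^ k).coeff (m : ℕ))
      = Q.coeff k * ∑ m : Fin (n + 1), x m * (polv c * X ^ k).coeff (m : ℕ) := by
        rw [Finset.mul_sum]; exact Finset.sum_congr rfl fun m _ => by ring
    _ = 0 := by rw [this, hx k hk', mul_zero]

lemma matrix_eq_of_mulVec {m : Type*} [Fintype m] [DecidableEq m] {M N : Matrix m m K}
    (hMN : ∀ x, M.mulVec x = N.mulVec x) : M = N := by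
  ext i j
  have := congrFun (hMN (Pi.single j 1)) i
  simpa [Matrix.mulVec_single] using this

lemma phi_transpose_inv {n : ℕ} (B B' : Matrix (Fin 2) (Fin 2) K) (hv : linPoly B 1 ≠ 0)
    (hBB : B' * B = 1) :
    (phiMap n B).transpose * (phiMap n B').transpose = 1 := by
  apply matrix_eq_of_mulVec
  intro x
  rw [← Matrix.mulVec_mulVec, Matrix.one_mulVec]
  funext j
  have h1 : (fun i : Fin (n + 1) => (phiMap n B').transpose.mulVec x i) =
      (fun i : Fin (n + 1) => (tfm B' n (polv x)).coeff (i : ℕ)) := by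
    funext i; exact phiMap_transpose_mulVec B' x i
  rw [phiMap_transpose_mulVec B _ j]
  rw [show polv ((phiMap n B').transpose.mulVec x) =
      polv (fun i : Fin (n + 1) => (tfm B' n (polv x)).coeff (i : ℕ)) from congrArg polv h1]
  rw [polv_eq _ (tfm_natDegree B' n (polv x)), tfm_comp B B' hv, hBB,
    tfm_id _ (polv_natDegree x), polv_coeff_lt x j.isLt, Fin.eta]

lemma phi_mul_inv {n : ℕ} (B B' : Matrix (Fin 2) (Fin 2) K) (hv : linPoly B' 1 ≠ 0)
    (hBB : B * B' = 1) :
    phiMap n B * phiMap n B' = 1 := by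
  have := phi_transpose_inv (n := n) B' B hv hBB
  rw [← Matrix.transpose_mul] at this
  calc phiMap n B * phiMap n B' = ((phiMap n B * phiMap n B').transpose).transpose := by
        rw [Matrix.transpose_transpose]
    _ = 1 := by rw [this, Matrix.transpose_one]

end Aux2

/-- For a nonzero `a ∈ ℚ^{h+1}` and an integer matrix `B` with `det B ≠ 0`, the image of
`L_a` under `x ↦ φ_n(B)x` equals `L_b` with `b = (φ_h(B⁻¹))ᵀ·a`, where `B⁻¹ ∈ M₂(ℚ)`. -/
theorem stmt11 (n h : ℕ) (h1 : 1 ≤ h) (h2 : h ≤ n)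
    (a : Fin (h + 1) → ℚ) (ha : a ≠ 0)
    (B : Matrix (Fin 2) (Fin 2) ℤ) (hB : B.det ≠ 0) :
    (fun x : Fin (n + 1) → ℝ => ((phiMap n B).map (Int.cast : ℤ → ℝ)).mulVec x) ''
        Lsub n h (fun i => (a i : ℝ)) =
      Lsub n h (fun i =>
        (((phiMap h ((B.map (Int.cast : ℤ → ℚ))⁻¹)).transpose.mulVec a) i : ℝ)) := by
  classical
  set A : Matrix (Fin 2) (Fin 2) ℝ := B.map (Int.cast : ℤ → ℝ) with hA
  have hAdet : A.det ≠ 0 := by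
    have hd : A.det = ((B.det : ℤ) : ℝ) := ((Int.castRingHom ℝ).map_det B).symm
    rw [hd]
    exact_mod_cast hB
  set A' : Matrix (Fin 2) (Fin 2) ℝ := A⁻¹ with hA'
  have hAA' : A * A' = 1 := Matrix.mul_nonsing_inv _ (isUnit_iff_ne_zero.mpr hAdet)
  have hA'A : A' * A = 1 := Matrix.nonsing_inv_mul _ (isUnit_iff_ne_zero.mpr hAdet)
  have hA'det : A'.det ≠ 0 := by
    have hd : A'.det * A.det = 1 := by rw [← Matrix.det_mul, hA'A, Matrix.det_one]
    intro h0; rw [h0, zero_mul] at hd; exact zero_ne_one hd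
  have hv : linPoly A 1 ≠ 0 := linPoly_ne A hAdet
  have hv' : linPoly A' 1 ≠ 0 := linPoly_ne A' hA'det
  set a' : Fin (h + 1) → ℝ := fun i => (a i : ℝ) with ha'
  set b' : Fin (h + 1) → ℝ := fun i => (tfm A' h (polv a')).coeff (i : ℕ) with hb'
  set Mq : Matrix (Fin 2) (Fin 2) ℚ := B.map (Int.cast : ℤ → ℚ) with hMq
  have hphi : (phiMap n B).map (Int.cast : ℤ → ℝ) = phiMap n A :=
    phiMap_map (Int.castRingHom ℝ) n B
  have hqdet : Mq.det ≠ 0 := by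
    have hd : Mq.det = ((B.det : ℤ) : ℚ) := ((Int.castRingHom ℚ).map_det B).symm
    rw [hd]
    exact_mod_cast hB
  have hmapmap : Mq.map (Rat.cast : ℚ → ℝ) = A := by
    rw [hMq, hA, Matrix.map_map]
    congr 1
  have h1q : Mq * Mq⁻¹ = 1 := Matrix.mul_nonsing_inv _ (isUnit_iff_ne_zero.mpr hqdet)
  have h2q : (Mq.map (Rat.cast : ℚ → ℝ)) * (Mq⁻¹.map (Rat.cast : ℚ → ℝ)) = 1 := by
    have hmm := congrArg (fun M : Matrix (Fin 2) (Fin 2) ℚ =>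
      M.map ((Rat.castHom ℝ : ℚ →+* ℝ) : ℚ → ℝ)) h1q
    rw [Matrix.map_mul] at hmm
    have hone : (1 : Matrix (Fin 2) (Fin 2) ℚ).map ((Rat.castHom ℝ : ℚ →+* ℝ) : ℚ → ℝ) = 1 :=
      Matrix.map_one _ (map_zero _) (map_one _)
    rw [hone] at hmm
    exact hmm
  have hinvmap : Mq⁻¹.map (Rat.cast : ℚ → ℝ) = A' := by
    rw [hA']
    refine (Matrix.inv_eq_right_inv ?_).symm
    rw [← hmapmap]
    exact h2q
  have hbv : (fun i : Fin (h + 1) =>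
      ((((phiMap h Mq⁻¹).transpose.mulVec a) i : ℚ) : ℝ)) = b' := by
    funext i
    have step1 : ((((phiMap h Mq⁻¹).transpose.mulVec a) i : ℚ) : ℝ) =
        ((phiMap h Mq⁻¹).map (Rat.cast : ℚ → ℝ)).transpose.mulVec a' i := by
      simp only [Matrix.mulVec, dotProduct, Matrix.transpose_apply, Matrix.map_apply,
        ha']
      push_cast
      rfl
    have hpm : (phiMap h Mq⁻¹).map (Rat.cast : ℚ → ℝ) = phiMap h A' := by
      calc (phiMap h Mq⁻¹).map (Rat.cast : ℚ → ℝ)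
          = phiMap h (Mq⁻¹.map (Rat.cast : ℚ → ℝ)) := phiMap_map (Rat.castHom ℝ) h Mq⁻¹
        _ = phiMap h A' := by rw [hinvmap]
    rw [step1, hpm, phiMap_transpose_mulVec A' a' i, hb']
  rw [hphi, hbv]
  ext y
  simp only [Set.mem_image]
  constructor
  · rintro ⟨x, hx, rfl⟩
    simp only [Lsub, Set.mem_setOf_eq] at hx ⊢
    intro j hj
    rw [← pair_shift h2 b' _ j hj]
    have hdeg : (polv b' * X ^ j : ℝ[X]).natDegree ≤ n := by
      refine le_trans natDegree_mul_le ?_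
      have hd1 := polv_natDegree b'
      have hd2 : (X ^ j : ℝ[X]).natDegree = j := natDegree_X_pow j
      omega
    rw [adjoint_sum A x _ hdeg]
    have hn : h + (n - h) = n := Nat.add_sub_cancel' h2
    have e1 := tfm_mul A hv (polv_natDegree b')
      (show (X ^ j : ℝ[X]).natDegree ≤ n - h from le_trans (le_of_eq (natDegree_X_pow j)) hj)
    rw [hn] at e1
    have e2 : polv b' = tfm A' h (polv a') := by
      rw [hb']; exact polv_eq _ (tfm_natDegree A' h (polv a'))
    have hsplit : tfm A n (polv b' * X ^ j) = polv a' * tfm A (n - h) (X ^ j) := by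
      rw [e1]
      congr 1
      rw [e2, tfm_comp A A' hv, hA'A, tfm_id _ (polv_natDegree a')]
    rw [hsplit]
    exact pair_mul h2 a' x hx _ (tfm_natDegree A (n - h) (X ^ j))
  · intro hy
    simp only [Lsub, Set.mem_setOf_eq] at hy
    refine ⟨(phiMap n A').mulVec y, ?_, ?_⟩
    · simp only [Lsub, Set.mem_setOf_eq]
      intro j hj
      rw [← pair_shift h2 a' _ j hj]
      have hdeg : (polv a' * X ^ j : ℝ[X]).natDegree ≤ n := by
        refine le_trans natDegree_mul_le ?_
        have hd1 := polv_natDegree a'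
        have hd2 : (X ^ j : ℝ[X]).natDegree = j := natDegree_X_pow j
        omega
      rw [adjoint_sum A' y _ hdeg]
      have hn : h + (n - h) = n := Nat.add_sub_cancel' h2
      have e1 := tfm_mul A' hv' (polv_natDegree a')
        (show (X ^ j : ℝ[X]).natDegree ≤ n - h from le_trans (le_of_eq (natDegree_X_pow j)) hj)
      rw [hn] at e1
      have hsplit : tfm A' n (polv a' * X ^ j) = polv b' * tfm A' (n - h) (X ^ j) := by
        rw [e1]
        congr 1
        rw [hb']
        exact (polv_eq _ (tfm_natDegree A' h (polv a'))).symm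
      rw [hsplit]
      exact pair_mul h2 b' y hy _ (tfm_natDegree A' (n - h) (X ^ j))
    · show (phiMap n A).mulVec ((phiMap n A').mulVec y) = y
      rw [Matrix.mulVec_mulVec, phi_mul_inv A A' hv' hAA', Matrix.one_mulVec]
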